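/- arXiv:1411.2289 — 2 statements merged into one kernel-verified Lean document; each statement's English description precedes it below -/
import Mathlib

section
/- If a nearest-neighbour Z^d shift of finite type X satisfies single-site fillability (SSF), then X satisfies topological strong spatial mixing with gap g = 2. -/
abbrev Site (d : ℕ) := Fin d → ℤ

def dist1 {d : ℕ} (p q : Site d) : ℕ := ∑ i, (p i - q i).natAbs

def unitVec {d : ℕ} (i : Fin d) : Site d := fun j => if j = i then 1 else 0

/-- The nearest-neighbour SFT defined by the forbidden edge configurations `E i a b`
(meaning the pair `(a, b)` is forbidden on an edge `{p, p + e_i}`). -/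
def nnSFT {d : ℕ} {A : Type*} (E : Fin d → A → A → Prop) : Set (Site d → A) :=
  {x | ∀ (p : Site d) (i : Fin d), ¬ E i (x p) (x (p + unitVec i))}

def TSSM {d : ℕ} {A : Type*} (X : Set (Site d → A)) (g : ℕ) : Prop :=
  ∀ U S V : Set (Site d), U.Finite → S.Finite → V.Finite →
    Disjoint U S → Disjoint S V → Disjoint U V →
    (∀ p ∈ U, ∀ q ∈ V, g ≤ dist1 p q) →
    ∀ u s v : Site d → A,
      (∃ x ∈ X, (∀ p ∈ U, x p = u p) ∧ (∀ p ∈ S, x p = s p)) →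
      (∃ x ∈ X, (∀ p ∈ S, x p = s p) ∧ (∀ p ∈ V, x p = v p)) →
      ∃ x ∈ X, (∀ p ∈ U, x p = u p) ∧ (∀ p ∈ S, x p = s p) ∧ ∀ p ∈ V, x p = v p

lemma dist1_symm {d : ℕ} (p q : Site d) : dist1 p q = dist1 q p := by
  unfold dist1; exact Finset.sum_congr rfl (fun i _ => by omega)

lemma dist1_self {d : ℕ} (p : Site d) : dist1 p p = 0 := by
  unfold dist1; simp

lemma dist1_add_unitVec {d : ℕ} (p : Site d) (i : Fin d) :
    dist1 (p + unitVec i) p = 1 := by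
  unfold dist1
  have : ∀ j, ((p + unitVec i) j - p j).natAbs = if j = i then 1 else 0 := by
    intro j
    simp only [Pi.add_apply, unitVec]
    by_cases h : j = i <;> simp [h]
  calc ∑ j, ((p + unitVec i) j - p j).natAbs = ∑ j, if j = i then 1 else 0 :=
        Finset.sum_congr rfl (fun j _ => this j)
    _ = 1 := by simp

lemma add_unitVec_ne {d : ℕ} (p : Site d) (i : Fin d) : p + unitVec i ≠ p := by
  intro h
  have := congrFun h i
  simp [unitVec] at this

lemma ball_finite {d : ℕ} (q : Site d) : {p : Site d | dist1 p q ≤ 1}.Finite := by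
  have : {p : Site d | dist1 p q ≤ 1} ⊆ Set.pi Set.univ (fun i => Set.Icc (q i - 1) (q i + 1)) := by
    intro p hp i _
    have h1 : (p i - q i).natAbs ≤ dist1 p q := by
      unfold dist1
      exact Finset.single_le_sum (f := fun j => (p j - q j).natAbs) (fun j _ => Nat.zero_le _) (Finset.mem_univ i)
    have h2 : (p i - q i).natAbs ≤ 1 := le_trans h1 hp
    constructor <;> omega
  exact Set.Finite.subset (Set.Finite.pi (fun i => Set.finite_Icc _ _)) this

noncomputable def fillList {d : ℕ} {A : Type*}
    (E : Fin d → A → A → Prop)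
    (hssf : ∀ η : Site d → A, ∃ a : A,
      ∀ i : Fin d, ¬ E i a (η (unitVec i)) ∧ ¬ E i (η (-unitVec i)) a) :
    List (Site d) → (Site d → A) → (Site d → A)
  | [], w => w
  | p :: t, w =>
      fillList E hssf t (Function.update w p (Classical.choose (hssf (fun r => w (p + r)))))

lemma fillList_agree {d : ℕ} {A : Type*}
    (E : Fin d → A → A → Prop)
    (hssf : ∀ η : Site d → A, ∃ a : A,
      ∀ i : Fin d, ¬ E i a (η (unitVec i)) ∧ ¬ E i (η (-unitVec i)) a) :
    ∀ (l : List (Site d)) (w : Site d → A) (p : Site d), p ∉ l →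
      fillList E hssf l w p = w p := by
  intro l
  induction l with
  | nil => intro w p _; rfl
  | cons q t ih =>
      intro w p hp
      simp only [List.mem_cons, not_or] at hp
      rw [fillList, ih _ _ hp.2, Function.update_of_ne hp.1]

lemma fillList_admissible {d : ℕ} {A : Type*}
    (E : Fin d → A → A → Prop)
    (hssf : ∀ η : Site d → A, ∃ a : A,
      ∀ i : Fin d, ¬ E i a (η (unitVec i)) ∧ ¬ E i (η (-unitVec i)) a) :
    ∀ (l : List (Site d)) (w : Site d → A),
      (∀ (p : Site d) (i : Fin d), p ∉ l → p + unitVec i ∉ l →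
        ¬ E i (w p) (w (p + unitVec i))) →
      fillList E hssf l w ∈ nnSFT E := by
  intro l
  induction l with
  | nil =>
      intro w hw p i
      exact hw p i List.not_mem_nil List.not_mem_nil
  | cons q t ih =>
      intro w hw
      rw [fillList]
      set a := Classical.choose (hssf (fun r => w (q + r))) with ha
      have hspec := Classical.choose_spec (hssf (fun r => w (q + r)))
      apply ih
      intro p i hp hpe
      by_cases h1 : p = q
      · subst h1
        rw [Function.update_self, Function.update_of_ne (add_unitVec_ne p i)]
        exact (hspec i).1
      · rw [Function.update_of_ne h1]
        by_cases h2 : p + unitVec i = q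
        · rw [h2, Function.update_self]
          have : p = q + (-unitVec i) := by
            rw [← h2]; funext j; simp
          rw [this]
          exact (hspec i).2
        · rw [Function.update_of_ne h2]
          exact hw p i (by simp [h1, hp]) (by simp [h2, hpe])

/-- Single-site fillability implies topological strong spatial mixing with gap 2. -/
theorem ssf_implies_tssm {d : ℕ} {A : Type*} [Fintype A] (E : Fin d → A → A → Prop)
    (hssf : ∀ η : Site d → A, ∃ a : A,
      ∀ i : Fin d, ¬ E i a (η (unitVec i)) ∧ ¬ E i (η (-unitVec i)) a) :
    TSSM (nnSFT E) 2 := by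
  classical
  rintro U S V hUf hSf hVf hUS hSV hUV hdist u s v ⟨x, hxX, hxU, hxS⟩ ⟨y, hyX, hyS, hyV⟩
  set D : Set (Site d) := {p | ∃ q ∈ U, dist1 p q ≤ 1} with hD
  set w : Site d → A := fun p => if p ∈ D then x p else y p with hw
  set F : Set (Site d) := {p | p ∈ D ∧ p ∉ U ∧ p ∉ S} with hF
  -- V is disjoint from D
  have hVD : ∀ p ∈ V, p ∉ D := by
    rintro p hpV ⟨q, hqU, hle⟩
    have h2 := hdist q hqU p hpV
    rw [dist1_symm] at h2
    omega
  have hUD : ∀ p ∈ U, p ∈ D := fun p hp => ⟨p, hp, by rw [dist1_self]; exact Nat.zero_le 1⟩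
  -- F is finite
  have hFfin : F.Finite := by
    apply Set.Finite.subset (hUf.biUnion (fun q _ => ball_finite q))
    rintro p ⟨⟨q, hqU, hle⟩, -, -⟩
    exact Set.mem_biUnion hqU hle
  set l : List (Site d) := hFfin.toFinset.toList with hl
  have hml : ∀ p : Site d, p ∈ l ↔ p ∈ F := by
    intro p; rw [Finset.mem_toList, Set.Finite.mem_toFinset]
  -- boundary condition for w
  have hwadm : ∀ (p : Site d) (i : Fin d), p ∉ l → p + unitVec i ∉ l →
      ¬ E i (w p) (w (p + unitVec i)) := by
    intro p i hp hq
    rw [hml] at hp hq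
    by_cases hpD : p ∈ D <;> by_cases hqD : p + unitVec i ∈ D
    · simp only [hw, if_pos hpD, if_pos hqD]
      exact hxX p i
    · -- p ∈ D, p + e_i ∉ D : then p ∈ S
      have hpU : p ∉ U := fun h => hqD ⟨p, h, le_of_eq (dist1_add_unitVec p i)⟩
      have hpS : p ∈ S := by
        by_contra hpS
        exact hp ⟨hpD, hpU, hpS⟩
      have hxy : x p = y p := by rw [hxS p hpS, hyS p hpS]
      simp only [hw, if_pos hpD, if_neg hqD, hxy]
      exact hyX p i
    · -- p ∉ D, p + e_i ∈ D : then p + e_i ∈ S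
      have hqU : p + unitVec i ∉ U := by
        intro h
        exact hpD ⟨p + unitVec i, h, by rw [dist1_symm, dist1_add_unitVec]⟩
      have hqS : p + unitVec i ∈ S := by
        by_contra hqS
        exact hq ⟨hqD, hqU, hqS⟩
      have hxy : x (p + unitVec i) = y (p + unitVec i) := by
        rw [hxS _ hqS, hyS _ hqS]
      simp only [hw, if_neg hpD, if_pos hqD, hxy]
      exact hyX p i
    · simp only [hw, if_neg hpD, if_neg hqD]
      exact hyX p i
  refine ⟨fillList E hssf l w, fillList_admissible E hssf l w hwadm, ?_, ?_, ?_⟩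
  · intro p hpU
    have hpF : p ∉ l := by
      rw [hml]; rintro ⟨-, h, -⟩; exact h hpU
    rw [fillList_agree E hssf l w p hpF]
    simp only [hw, if_pos (hUD p hpU)]
    exact hxU p hpU
  · intro p hpS
    have hpF : p ∉ l := by
      rw [hml]; rintro ⟨-, -, h⟩; exact h hpS
    rw [fillList_agree E hssf l w p hpF]
    by_cases hpD : p ∈ D
    · simp only [hw, if_pos hpD]; exact hxS p hpS
    · simp only [hw, if_neg hpD]; exact hyS p hpS
  · intro p hpV
    have hpD := hVD p hpV
    have hpF : p ∉ l := by
      rw [hml]; rintro ⟨h, -, -⟩; exact hpD h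
    rw [fillList_agree E hssf l w p hpF]
    simp only [hw, if_neg hpD]
    exact hyV p hpV
end

section
/- Let μ be a shift-invariant Markov random field satisfying strong spatial mixing (with some vanishing rate f) such that c_μ > 0. Then supp(μ) satisfies topological strong spatial mixing; specifically, TSSM holds with any gap n_0 such that f(n) < c_μ for all n ≥ n_0. -/
open MeasureTheory

/-- Outer boundary of a set of sites. -/
def bd {d : ℕ} (S : Set (Site d)) : Set (Site d) :=
  {p | p ∉ S ∧ ∃ q ∈ S, dist1 p q = 1}

/-- Cylinder set: points agreeing with `u` on `S`. -/
def cyl {d : ℕ} {A : Type*} (S : Set (Site d)) (u : Site d → A) : Set (Site d → A) :=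
  {x | ∀ p ∈ S, x p = u p}

noncomputable def condR {d : ℕ} {A : Type*} [MeasurableSpace A]
    (μ : Measure (Site d → A)) (E B : Set (Site d → A)) : ℝ :=
  (μ (E ∩ B) / μ B).toReal

def ShiftInvariant {d : ℕ} {A : Type*} [MeasurableSpace A]
    (μ : Measure (Site d → A)) : Prop :=
  ∀ (t : Site d) (E : Set (Site d → A)),
    μ ((fun (x : Site d → A) (q : Site d) => x (q + t)) ⁻¹' E) = μ E

/-- Markov random field property. -/
def IsMRF {d : ℕ} {A : Type*} [MeasurableSpace A] (μ : Measure (Site d → A)) : Prop :=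
  ∀ S : Set (Site d), S.Finite → ∀ u : Site d → A,
    ∀ T : Set (Site d), T.Finite → bd S ⊆ T → Disjoint S T →
    ∀ δ : Site d → A, 0 < μ (cyl T δ) →
      condR μ (cyl S u) (cyl T δ) = condR μ (cyl S u) (cyl (bd S) δ)

/-- The support of `μ`: points all of whose cylinder sets have positive measure. -/
def mrfSupport {d : ℕ} {A : Type*} [MeasurableSpace A]
    (μ : Measure (Site d → A)) : Set (Site d → A) :=
  {x | ∀ S : Set (Site d), S.Finite → 0 < μ (cyl S x)}

/-- ℓ¹ distance between two sets of sites (junk value `0` via `sInf ∅` if one is empty). -/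
noncomputable def setD {d : ℕ} (U V : Set (Site d)) : ℕ :=
  sInf {n : ℕ | ∃ p ∈ U, ∃ q ∈ V, dist1 p q = n}

/-- Strong spatial mixing with rate `f`. -/
def SSM {d : ℕ} {A : Type*} [MeasurableSpace A]
    (μ : Measure (Site d → A)) (f : ℕ → ℝ) : Prop :=
  ∀ W : Set (Site d), W.Finite → ∀ U : Set (Site d), U ⊆ W → ∀ u : Site d → A,
    ∀ δ₁ δ₂ : Site d → A, 0 < μ (cyl (bd W) δ₁) → 0 < μ (cyl (bd W) δ₂) →
      |condR μ (cyl U u) (cyl (bd W) δ₁) - condR μ (cyl U u) (cyl (bd W) δ₂)| ≤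
        (U.ncard : ℝ) * f (setD U {p ∈ bd W | δ₁ p ≠ δ₂ p})
section AuxLemmas

variable {d : ℕ} {A : Type*}

lemma dist1_comm (p q : Site d) : dist1 p q = dist1 q p := by
  unfold dist1
  exact Finset.sum_congr rfl fun i _ => by rw [← Int.natAbs_neg]; ring_nf

lemma dist1_triangle (p r q : Site d) : dist1 p q ≤ dist1 p r + dist1 r q := by
  unfold dist1
  rw [← Finset.sum_add_distrib]
  refine Finset.sum_le_sum fun i _ => ?_
  have h : p i - q i = (p i - r i) + (r i - q i) := by ring
  rw [h]
  exact Int.natAbs_add_le _ _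

lemma finite_ball (c : Site d) (r : ℕ) : {x : Site d | dist1 x c ≤ r}.Finite := by
  have hsub : {x : Site d | dist1 x c ≤ r} ⊆
      Set.pi Set.univ (fun i => Set.Icc (c i - r) (c i + r)) := by
    intro x hx i _
    have h1 : (x i - c i).natAbs ≤ dist1 x c :=
      Finset.single_le_sum (f := fun i => (x i - c i).natAbs)
        (fun _ _ => Nat.zero_le _) (Finset.mem_univ i)
    have h2 : ((x i - c i).natAbs : ℤ) ≤ (r : ℤ) := by
      exact_mod_cast le_trans h1 hx
    have h3 : |x i - c i| ≤ (r : ℤ) := by rw [Int.abs_eq_natAbs]; exact h2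
    obtain ⟨ha, hb⟩ := abs_le.mp h3
    exact ⟨by linarith, by linarith⟩
  exact Set.Finite.subset (Set.Finite.pi fun i => Set.finite_Icc _ _) hsub

lemma bd_finite {W : Set (Site d)} (hW : W.Finite) : (bd W).Finite := by
  have hsub : bd W ⊆ ⋃ q ∈ W, {x : Site d | dist1 x q ≤ 1} := by
    rintro p ⟨hp, q, hq, hd⟩
    exact Set.mem_biUnion hq (by simp [hd])
  exact Set.Finite.subset (hW.biUnion fun q _ => finite_ball q 1) hsub

lemma cyl_congr {S : Set (Site d)} {u v : Site d → A} (h : ∀ p ∈ S, u p = v p) :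
    cyl S u = cyl S v := by
  ext z
  simp only [cyl, Set.mem_setOf_eq]
  exact ⟨fun hz p hp => (hz p hp).trans (h p hp),
         fun hz p hp => (hz p hp).trans (h p hp).symm⟩

lemma condR_pos_iff [MeasurableSpace A] {μ : Measure (Site d → A)} [IsFiniteMeasure μ]
    {E B : Set (Site d → A)} (hB : 0 < μ B) : 0 < condR μ E B ↔ 0 < μ (E ∩ B) := by
  unfold condR
  rw [ENNReal.toReal_pos_iff]
  constructor
  · rintro ⟨h1, -⟩
    rw [pos_iff_ne_zero] at h1 ⊢
    intro h
    exact h1 (by rw [h, ENNReal.zero_div])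
  · intro h
    constructor
    · rw [pos_iff_ne_zero, Ne, ENNReal.div_eq_zero_iff]
      push_neg
      exact ⟨h.ne', measure_ne_top μ B⟩
    · exact ENNReal.div_lt_top (measure_ne_top μ _) hB.ne'

end AuxLemmas
section ShiftLemmas

variable {d : ℕ} {A : Type*}

/-- The shift map. -/
def shf (t : Site d) (x : Site d → A) : Site d → A := fun q => x (q + t)

lemma shf_preimage_cyl (t : Site d) (S : Set (Site d)) (w : Site d → A) :
    shf t ⁻¹' cyl S w = cyl ((fun q => q + t) '' S) (fun q => w (q - t)) := by
  ext z
  simp only [cyl, Set.mem_preimage, Set.mem_setOf_eq, shf]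
  constructor
  · rintro h q ⟨p, hp, rfl⟩
    simpa using h p hp
  · intro h p hp
    simpa using h (p + t) ⟨p, hp, rfl⟩

variable [MeasurableSpace A] {μ : MeasureTheory.Measure (Site d → A)}

lemma shf_mem_support (hinv : ShiftInvariant μ)
    {x : Site d → A} (hx : x ∈ mrfSupport μ) (t : Site d) : shf t x ∈ mrfSupport μ := by
  intro F hF
  have key : μ (cyl F (shf t x)) = μ (cyl ((fun q => q + t) '' F) x) := by
    rw [← hinv t (cyl F (shf t x))]
    have : (fun (x : Site d → A) (q : Site d) => x (q + t)) = shf t := rfl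
    rw [this, shf_preimage_cyl]
    congr 1
    apply cyl_congr
    intro p _
    simp [shf]
  rw [key]
  exact hx _ (hF.image _)

lemma cmu_bound (hinv : ShiftInvariant μ) {c : ℝ}
    (hcb : ∀ x ∈ mrfSupport μ, ∀ S : Set (Site d), S.Finite → (0 : Site d) ∉ S →
      c ≤ condR μ (cyl {(0 : Site d)} x) (cyl S x))
    {x : Site d → A} (hx : x ∈ mrfSupport μ) (p : Site d) (S : Set (Site d))
    (hS : S.Finite) (hpS : p ∉ S) :
    c ≤ condR μ (cyl {p} x) (cyl S x) := by
  set x' := shf p x with hx'def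
  set S' := (fun q => q + (-p)) '' S with hS'def
  have hx's : x' ∈ mrfSupport μ := shf_mem_support hinv hx p
  have h0 : (0 : Site d) ∉ S' := by
    rintro ⟨q, hq, hq0⟩
    have hqp : q = p := by
      have : q - p = 0 := by rw [sub_eq_add_neg]; exact hq0
      exact sub_eq_zero.mp this
    exact hpS (hqp ▸ hq)
  have hb := hcb x' hx's S' (hS.image _) h0
  -- transfer the cylinders back
  have hshfp : (fun (z : Site d → A) (q : Site d) => z (q + p)) = shf p := rfl
  have e1 : cyl ((fun q => q + p) '' {(0 : Site d)}) (fun q => x' (q - p)) = cyl {p} x := by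
    rw [Set.image_singleton, zero_add]
    apply cyl_congr
    intro q _
    simp [hx'def, shf]
  have e2 : cyl ((fun q => q + p) '' S') (fun q => x' (q - p)) = cyl S x := by
    have himg : (fun q => q + p) '' S' = S := by
      rw [hS'def, ← Set.image_comp]
      ext q
      simp [Function.comp]
    rw [himg]
    apply cyl_congr
    intro q _
    simp [hx'def, shf]
  have hnum : μ (cyl {(0 : Site d)} x' ∩ cyl S' x') = μ (cyl {p} x ∩ cyl S x) := by
    rw [← hinv p (cyl {(0 : Site d)} x' ∩ cyl S' x'), hshfp, Set.preimage_inter,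
      shf_preimage_cyl, shf_preimage_cyl, e1, e2]
  have hden : μ (cyl S' x') = μ (cyl S x) := by
    rw [← hinv p (cyl S' x'), hshfp, shf_preimage_cyl, e2]
  unfold condR at hb ⊢
  rw [hnum, hden] at hb
  exact hb

end ShiftLemmas
section SupportAE

open MeasureTheory

variable {d : ℕ} {A : Type*} [Fintype A] [Nonempty A] [MeasurableSpace A]

lemma exists_mem_support (μ : Measure (Site d → A)) [IsProbabilityMeasure μ]
    {E : Set (Site d → A)} (hE : 0 < μ E) :
    ∃ z ∈ E, z ∈ mrfSupport μ := by
  classical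
  let ee : (Σ F : Finset (Site d), (F → A)) → (Site d → A) :=
    fun σ q => if h : q ∈ σ.1 then σ.2 ⟨q, h⟩ else Classical.arbitrary A
  let N : (Σ F : Finset (Site d), (F → A)) → Set (Site d → A) :=
    fun σ => if μ (cyl (↑σ.1) (ee σ)) = 0 then cyl (↑σ.1) (ee σ) else ∅
  have hNnull : ∀ σ, μ (N σ) = 0 := by
    intro σ
    by_cases h : μ (cyl (↑σ.1) (ee σ)) = 0 <;> simp [N, h]
  have hsub : (mrfSupport μ)ᶜ ⊆ ⋃ σ, N σ := by
    intro z hz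
    simp only [mrfSupport, Set.mem_compl_iff, Set.mem_setOf_eq, not_forall] at hz
    obtain ⟨S, hSfin, hpos⟩ := hz
    have hμ0 : μ (cyl S z) = 0 := by
      rw [not_lt] at hpos
      exact le_antisymm hpos zero_le
    refine Set.mem_iUnion.mpr ⟨⟨hSfin.toFinset, fun q => z ↑q⟩, ?_⟩
    have hcylEq : cyl (↑(hSfin.toFinset) : Set (Site d))
        (ee ⟨hSfin.toFinset, fun q => z ↑q⟩) = cyl S z := by
      rw [hSfin.coe_toFinset]
      apply cyl_congr
      intro q hq
      simp [ee, hSfin.mem_toFinset.mpr hq]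
    have hz0 : μ (cyl (↑(hSfin.toFinset) : Set (Site d))
        (ee ⟨hSfin.toFinset, fun q => z ↑q⟩) ) = 0 := by rw [hcylEq]; exact hμ0
    simp only [N, if_pos hz0]
    rw [hcylEq]
    intro q _
    rfl
  have hnull : μ (mrfSupport μ)ᶜ = 0 :=
    measure_mono_null hsub (measure_iUnion_null hNnull)
  have hpos : 0 < μ (E ∩ mrfSupport μ) := by
    by_contra h
    push_neg at h
    have h0 : μ (E ∩ mrfSupport μ) = 0 := le_antisymm h zero_le
    have hle : μ E ≤ μ (E ∩ mrfSupport μ) + μ (E \ mrfSupport μ) :=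
      measure_le_inter_add_diff μ E (mrfSupport μ)
    have h2 : μ (E \ mrfSupport μ) = 0 :=
      measure_mono_null (fun a ha => ha.2) hnull
    rw [h0, h2, add_zero] at hle
    exact absurd hle (not_le.mpr hE)
  obtain ⟨z, hz⟩ := nonempty_of_measure_ne_zero hpos.ne'
  exact ⟨z, hz.1, hz.2⟩

end SupportAE
section KeyStep

open MeasureTheory

lemma key_step {d : ℕ} {A : Type*} [Fintype A] [MeasurableSpace A]
    (μ : Measure (Site d → A)) [IsProbabilityMeasure μ]
    (hinv : ShiftInvariant μ) (hmrf : IsMRF μ)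
    (f : ℕ → ℝ) (hssm : SSM μ f)
    (c : ℝ) (hc : 0 < c)
    (hcb : ∀ x ∈ mrfSupport μ, ∀ S : Set (Site d), S.Finite → (0 : Site d) ∉ S →
      c ≤ condR μ (cyl {(0 : Site d)} x) (cyl S x))
    (n₀ : ℕ) (hn₀ : ∀ n, n₀ ≤ n → f n < c)
    (p : Site d) (S V : Set (Site d)) (hS : S.Finite) (hV : V.Finite)
    (hpS : p ∉ S) (hpV : p ∉ V) (hdV : ∀ q ∈ V, n₀ ≤ dist1 p q)
    (x y : Site d → A) (hx : x ∈ mrfSupport μ) (hy : y ∈ mrfSupport μ)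
    (hxy : ∀ q ∈ S, x q = y q) :
    ∃ z ∈ mrfSupport μ, z p = x p ∧ ∀ q ∈ S ∪ V, z q = y q := by
  classical
  haveI : Nonempty A := ⟨x p⟩
  set W : Set (Site d) := {q | dist1 q p ≤ n₀} \ (S ∪ V) with hWdef
  have hWfin : W.Finite := (finite_ball p n₀).diff
  have hpW : p ∈ W := by
    constructor
    · simp [dist1, sub_self]
    · rintro (h | h)
      exacts [hpS h, hpV h]
  have hbdfin : (bd W).Finite := bd_finite hWfin
  have hposx : 0 < μ (cyl (bd W) x) := hx _ hbdfin
  have hposy : 0 < μ (cyl (bd W) y) := hy _ hbdfin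
  have hfar : ∀ q ∈ bd W, x q ≠ y q → n₀ ≤ dist1 p q := by
    intro q hq hne
    obtain ⟨hqW, q', hq'W, hd⟩ := hq
    have hqS : q ∉ S := fun h => hne (hxy q h)
    by_cases hqV : q ∈ V
    · exact hdV q hqV
    · have hnb : ¬ dist1 q p ≤ n₀ := by
        intro hle
        exact hqW ⟨hle, by rintro (h | h); exacts [hqS h, hqV h]⟩
      rw [dist1_comm]
      omega
  have hpbd : p ∉ bd W := fun h => h.1 hpW
  have hcbound : c ≤ condR μ (cyl {p} x) (cyl (bd W) x) :=
    cmu_bound hinv hcb hx p (bd W) hbdfin hpbd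
  have hpos2 : 0 < condR μ (cyl {p} x) (cyl (bd W) y) := by
    by_cases hSig : {q ∈ bd W | x q ≠ y q}.Nonempty
    · have hssmb := hssm W hWfin {p} (Set.singleton_subset_iff.mpr hpW) x x y hposx hposy
      have hb' : |condR μ (cyl {p} x) (cyl (bd W) x) -
          condR μ (cyl {p} x) (cyl (bd W) y)| ≤ f (setD {p} {q ∈ bd W | x q ≠ y q}) := by
        simpa [Set.ncard_singleton] using hssmb
      have hm : n₀ ≤ setD {p} {q ∈ bd W | x q ≠ y q} := by
        have hne : {n : ℕ | ∃ a ∈ ({p} : Set (Site d)),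
            ∃ q ∈ {q ∈ bd W | x q ≠ y q}, dist1 a q = n}.Nonempty := by
          obtain ⟨q, hq⟩ := hSig
          exact ⟨dist1 p q, p, rfl, q, hq, rfl⟩
        obtain ⟨a, ha, q, hq, hdq⟩ := Nat.sInf_mem hne
        rw [Set.mem_singleton_iff] at ha
        subst ha
        unfold setD
        rw [← hdq]
        exact hfar q hq.1 hq.2
      have hflt : f (setD {p} {q ∈ bd W | x q ≠ y q}) < c := hn₀ _ hm
      obtain ⟨h1, h2⟩ := abs_le.mp hb'
      linarith
    · have hEq : cyl (bd W) x = cyl (bd W) y := by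
        apply cyl_congr
        intro q hq
        by_contra hne
        exact hSig ⟨q, hq, hne⟩
      rw [← hEq]
      linarith
  have hμ1 : 0 < μ (cyl {p} x ∩ cyl (bd W) y) := (condR_pos_iff hposy).mp hpos2
  haveI := hWfin.to_subtype
  let ee : (W → A) → (Site d → A) := fun g q => if h : q ∈ W then g ⟨q, h⟩ else x q
  have hcover : cyl {p} x ∩ cyl (bd W) y ⊆
      ⋃ g : W → A, (cyl W (ee g) ∩ (cyl {p} x ∩ cyl (bd W) y)) := by
    intro z hz
    refine Set.mem_iUnion.mpr ⟨fun w => z ↑w, ?_, hz⟩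
    intro q hq
    simp [ee, hq]
  have hex : ∃ g : W → A, μ (cyl W (ee g) ∩ (cyl {p} x ∩ cyl (bd W) y)) ≠ 0 := by
    by_contra h
    push_neg at h
    have h0 := measure_iUnion_null h
    have hle := (measure_mono hcover).trans_eq h0
    exact absurd hle (not_le.mpr hμ1)
  obtain ⟨g, hg⟩ := hex
  have hgpos : 0 < μ (cyl W (ee g) ∩ (cyl {p} x ∩ cyl (bd W) y)) := pos_iff_ne_zero.mpr hg
  obtain ⟨z₀, hz₀⟩ := nonempty_of_measure_ne_zero hg
  have hegp : ee g p = x p := by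
    have h1 : z₀ p = ee g p := hz₀.1 p hpW
    have h2 : z₀ p = x p := hz₀.2.1 p rfl
    rw [← h1, h2]
  have hμ2 : 0 < μ (cyl W (ee g) ∩ cyl (bd W) y) :=
    lt_of_lt_of_le hgpos (measure_mono fun z hz => ⟨hz.1, hz.2.2⟩)
  set T : Set (Site d) := bd W ∪ (S ∪ V) with hT
  have hTfin : T.Finite := hbdfin.union (hS.union hV)
  have hTpos : 0 < μ (cyl T y) := hy _ hTfin
  have hdisj : Disjoint W T := by
    rw [Set.disjoint_left]
    rintro a haW (h | h)
    · exact h.1 haW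
    · exact haW.2 h
  have hMRF := hmrf W hWfin (ee g) T hTfin Set.subset_union_left hdisj y hTpos
  have hcond2 : 0 < condR μ (cyl W (ee g)) (cyl T y) := by
    rw [hMRF]
    exact (condR_pos_iff hposy).mpr hμ2
  have hμ3 : 0 < μ (cyl W (ee g) ∩ cyl T y) := (condR_pos_iff hTpos).mp hcond2
  obtain ⟨z, hzE, hzsupp⟩ := exists_mem_support μ hμ3
  refine ⟨z, hzsupp, ?_, ?_⟩
  · rw [hzE.1 p hpW, hegp]
  · intro q hq
    exact hzE.2 q (Or.inr hq)

end KeyStep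

/-- If a shift-invariant MRF satisfies SSM with a vanishing rate `f` and `c_μ > 0`
(witnessed by a positive uniform lower bound `c` on the conditional probabilities),
then its support satisfies TSSM with any gap `n₀` such that `f n < c` for all `n ≥ n₀`. -/
theorem ssm_cmu_pos_implies_tssm {d : ℕ} {A : Type*} [Fintype A] [MeasurableSpace A]
    (μ : Measure (Site d → A)) [IsProbabilityMeasure μ]
    (hinv : ShiftInvariant μ) (hmrf : IsMRF μ)
    (f : ℕ → ℝ) (hf0 : ∀ n, 0 ≤ f n)
    (hftend : Filter.Tendsto f Filter.atTop (nhds 0))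
    (hssm : SSM μ f)
    (c : ℝ) (hc : 0 < c)
    (hcb : ∀ x ∈ mrfSupport μ, ∀ S : Set (Site d), S.Finite → (0 : Site d) ∉ S →
      c ≤ condR μ (cyl {(0 : Site d)} x) (cyl S x))
    (n₀ : ℕ) (hn₀ : ∀ n, n₀ ≤ n → f n < c) :
    TSSM (mrfSupport μ) n₀ := by
  intro U S V hU hS hV hUS hSV hUV hdist u s v hus hsv
  obtain ⟨x, hxsupp, hxU, hxS⟩ := hus
  obtain ⟨y, hysupp, hyS, hyV⟩ := hsv
  have main : ∀ U' : Set (Site d), U'.Finite →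
      Disjoint U' S → Disjoint U' V →
      (∀ p ∈ U', ∀ q ∈ V, n₀ ≤ dist1 p q) → (∀ p ∈ U', x p = u p) →
      ∃ z ∈ mrfSupport μ, (∀ p ∈ U', z p = u p) ∧ (∀ q ∈ S, z q = s q) ∧
        ∀ q ∈ V, z q = v q := by
    intro U' hU'
    refine Set.Finite.induction_on U' hU' ?_ ?_
    · intro _ _ _ _
      exact ⟨y, hysupp, by simp, hyS, hyV⟩
    · intro p U'' hpU'' hU''fin IH hUS' hUV' hdist' hxU'
      obtain ⟨z, hz, hzU, hzS, hzV⟩ :=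
        IH (Set.disjoint_of_subset_left (Set.subset_insert _ _) hUS')
          (Set.disjoint_of_subset_left (Set.subset_insert _ _) hUV')
          (fun a ha => hdist' a (Set.mem_insert_of_mem _ ha))
          (fun a ha => hxU' a (Set.mem_insert_of_mem _ ha))
      have hpS : p ∉ S := Set.disjoint_left.mp hUS' (Set.mem_insert _ _)
      have hpV : p ∉ V := Set.disjoint_left.mp hUV' (Set.mem_insert _ _)
      have hpU''S : p ∉ U'' ∪ S := by
        rintro (h | h)
        exacts [hpU'' h, hpS h]
      have hagree : ∀ q ∈ U'' ∪ S, x q = z q := by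
        rintro q (hq | hq)
        · rw [hxU' q (Set.mem_insert_of_mem _ hq), hzU q hq]
        · rw [hxS q hq, hzS q hq]
      obtain ⟨w, hw, hwp, hwSV⟩ :=
        key_step μ hinv hmrf f hssm c hc hcb n₀ hn₀ p (U'' ∪ S) V
          (hU''fin.union hS) hV hpU''S hpV
          (fun q hq => hdist' p (Set.mem_insert _ _) q hq) x z hxsupp hz hagree
      refine ⟨w, hw, ?_, ?_, ?_⟩
      · intro q hq
        rcases Set.mem_insert_iff.mp hq with rfl | hq'
        · rw [hwp, hxU' q (Set.mem_insert _ _)]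
        · rw [hwSV q (Or.inl (Or.inl hq')), hzU q hq']
      · intro q hq
        rw [hwSV q (Or.inl (Or.inr hq)), hzS q hq]
      · intro q hq
        rw [hwSV q (Or.inr hq), hzV q hq]
  exact main U hU hUS hUV hdist hxU
end
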